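/- Let m > 0 and let a ≥ 0 be a constant. Then the function A ↦ A^{3/2} / (a + φ_m(A)) is strictly increasing on [36π m², ∞); equivalently, its derivative in A is strictly positive for A ≥ 36π m². -/

import Mathlib

/-- Area of the coordinate sphere of radius `r` in the Schwarzschild manifold of
mass `m`, in isotropic coordinates: `A_m(r) = 4π r² (1 + m/(2r))⁴`. -/
noncomputable def schwA (m r : ℝ) : ℝ := 4 * Real.pi * r ^ 2 * (1 + m / (2 * r)) ^ 4

/-- Volume enclosed between the horizon `r = m/2` and the coordinate sphere of radius `r`
in the Schwarzschild manifold of mass `m`: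
`V_m(r) = ∫_{m/2}^r 4π ρ² (1 + m/(2ρ))⁶ dρ`. -/
noncomputable def schwV (m r : ℝ) : ℝ :=
  ∫ ρ in (m / 2)..r, 4 * Real.pi * ρ ^ 2 * (1 + m / (2 * ρ)) ^ 6

/-- The Schwarzschild isoperimetric profile of mass `m`: `φ_m = V_m ∘ A_m⁻¹`, where
`A_m⁻¹ : [16πm², ∞) → [m/2, ∞)` is the inverse of the (bijective, strictly increasing)
area function `A_m : [m/2, ∞) → [16πm², ∞)`. -/
noncomputable def schwPhi (m A : ℝ) : ℝ :=
  schwV m (Function.invFunOn (schwA m) (Set.Ici (m / 2)) A)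

lemma log_pade (x : ℝ) (hx : 1 ≤ x) : 2*(x-1)/(x+1) ≤ Real.log x := by
  set g : ℝ → ℝ := fun y => Real.log y - 2*(y-1)/(y+1) with hg
  have hderiv : ∀ y ∈ Set.Ioi (1:ℝ), HasDerivAt g ((y-1)^2/(y*(y+1)^2)) y := by
    intro y hy
    have hy0 : 0 < y := lt_trans one_pos hy
    have hy1 : y + 1 ≠ 0 := by positivity
    have h1 : HasDerivAt Real.log y⁻¹ y := Real.hasDerivAt_log hy0.ne'
    have h2 : HasDerivAt (fun y : ℝ => 2*(y-1)/(y+1))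
        ((2*1*(y+1) - 2*(y-1)*1)/(y+1)^2) y :=
      (((hasDerivAt_id y).sub_const 1).const_mul 2).div ((hasDerivAt_id y).add_const 1) hy1
    refine (h1.sub h2).congr_deriv ?_
    field_simp
    ring
  have hmono : MonotoneOn g (Set.Ici 1) := by
    apply monotoneOn_of_deriv_nonneg (convex_Ici 1)
    · apply ContinuousOn.sub
      · intro y hy
        exact (Real.continuousAt_log (by simp at hy; positivity)).continuousWithinAt
      · apply ContinuousOn.div (by fun_prop) (by fun_prop)
        intro y hy
        simp at hy
        positivity
    · intro y hy
      rw [interior_Ici] at hy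
      exact (hderiv y hy).differentiableAt.differentiableWithinAt
    · intro y hy
      rw [interior_Ici] at hy
      rw [(hderiv y hy).deriv]
      have hy0 : 0 < y := lt_trans one_pos hy
      positivity
  have h0 := hmono Set.self_mem_Ici hx hx
  simp only [hg, Real.log_one] at h0
  norm_num at h0
  linarith

noncomputable def FF (w ρ : ℝ) : ℝ :=
  ρ^3/3 + 3*w*ρ^2 + 15*w^2*ρ + 20*w^3*Real.log ρ
    - 15*w^4/ρ - 3*w^5/ρ^2 - w^6/(3*ρ^3)

lemma hasDerivAt_FF (w ρ : ℝ) (hρ : ρ ≠ 0) :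
    HasDerivAt (FF w) ((ρ+w)^6/ρ^4) ρ := by
  have h2 : ρ^2 ≠ 0 := pow_ne_zero _ hρ
  have h3 : ρ^3 ≠ 0 := pow_ne_zero _ hρ
  have A1 : HasDerivAt (fun x : ℝ => x^3/3) (((3:ℕ):ℝ)*ρ^(3-1)/3) ρ :=
    (hasDerivAt_pow 3 ρ).div_const 3
  have A2 : HasDerivAt (fun x : ℝ => 3*w*x^2) (3*w*(((2:ℕ):ℝ)*ρ^(2-1))) ρ :=
    (hasDerivAt_pow 2 ρ).const_mul _
  have A3 : HasDerivAt (fun x : ℝ => 15*w^2*x) (15*w^2*1) ρ :=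
    (hasDerivAt_id ρ).const_mul _
  have A4 : HasDerivAt (fun x : ℝ => 20*w^3*Real.log x) (20*w^3*ρ⁻¹) ρ :=
    (Real.hasDerivAt_log hρ).const_mul _
  have A5 : HasDerivAt (fun x : ℝ => 15*w^4/x) ((0*ρ - 15*w^4*1)/ρ^2) ρ :=
    (hasDerivAt_const ρ _).div (hasDerivAt_id ρ) hρ
  have A6 : HasDerivAt (fun x : ℝ => 3*w^5/x^2) ((0*ρ^2 - 3*w^5*(((2:ℕ):ℝ)*ρ^(2-1)))/(ρ^2)^2) ρ :=
    (hasDerivAt_const ρ _).div (hasDerivAt_pow 2 ρ) h2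
  have A7 : HasDerivAt (fun x : ℝ => w^6/(3*x^3))
      ((0*(3*ρ^3) - w^6*(3*(((3:ℕ):ℝ)*ρ^(3-1))))/(3*ρ^3)^2) ρ :=
    (hasDerivAt_const ρ _).div ((hasDerivAt_pow 3 ρ).const_mul 3) (by simpa using h3)
  have H := ((((((A1.add A2).add A3).add A4).sub A5).sub A6).sub A7)
  unfold FF
  refine H.congr_deriv ?_
  field_simp
  ring

lemma schwV_eq (m r : ℝ) (hm : 0 < m) (hr : m/2 ≤ r) :
    schwV m r = 4*Real.pi*(FF (m/2) r - FF (m/2) (m/2)) := by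
  have hw : 0 < m/2 := by linarith
  have hsub : Set.uIcc (m/2) r ⊆ Set.Ioi 0 := by
    rw [Set.uIcc_of_le hr]
    intro x hx
    exact lt_of_lt_of_le hw hx.1
  unfold schwV
  rw [intervalIntegral.integral_congr (g := fun ρ : ℝ => 4*Real.pi*((ρ+m/2)^6/ρ^4))
    (by
      intro x hx
      have hx0 : x ≠ 0 := ne_of_gt (hsub hx)
      field_simp)]
  rw [intervalIntegral.integral_eq_sub_of_hasDerivAt
    (f := fun ρ : ℝ => 4*Real.pi*FF (m/2) ρ)
    (fun x hx => ((hasDerivAt_FF (m/2) x (ne_of_gt (hsub hx))).const_mul (4*Real.pi)))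
    ((ContinuousOn.mul continuousOn_const (ContinuousOn.div (by fun_prop) (by fun_prop)
      (fun x hx => pow_ne_zero _ (ne_of_gt (hsub hx))))).intervalIntegrable)]
  ring

lemma schwA_eq (m r : ℝ) (hr : r ≠ 0) : schwA m r = 4*Real.pi*(r+m/2)^4/r^2 := by
  unfold schwA
  field_simp

lemma schwA_strictMonoOn (m : ℝ) (hm : 0 < m) : StrictMonoOn (schwA m) (Set.Ici (m/2)) := by
  intro x hx y hy hxy
  simp only [Set.mem_Ici] at hx hy
  have hx0 : 0 < x := lt_of_lt_of_le (by linarith) hx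
  have hy0 : 0 < y := lt_of_lt_of_le (by linarith) hy
  rw [schwA_eq m x hx0.ne', schwA_eq m y hy0.ne',
    div_lt_div_iff₀ (by positivity) (by positivity)]
  have h1 : (x+m/2)^2*y < (y+m/2)^2*x := by
    have hxyw : 0 < x*y - (m/2)^2 := by nlinarith
    nlinarith [mul_pos (sub_pos.2 hxy) hxyw]
  have h1l : 0 < (x+m/2)^2*y := by positivity
  have h2 : ((x+m/2)^2*y)^2 < ((y+m/2)^2*x)^2 := by
    exact pow_lt_pow_left₀ h1 h1l.le two_ne_zero
  have h3 := mul_lt_mul_of_pos_left h2 (show (0:ℝ) < 4*Real.pi by positivity)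
  nlinarith [h3]

noncomputable def rr (m A : ℝ) : ℝ :=
  (Real.sqrt (A/(4*Real.pi)) - m +
    Real.sqrt (Real.sqrt (A/(4*Real.pi))^2 - 2*m*Real.sqrt (A/(4*Real.pi))))/2

lemma rr_spec (m A : ℝ) (hm : 0 < m) (hA : 16*Real.pi*m^2 ≤ A) :
    m/2 ≤ rr m A ∧ schwA m (rr m A) = A := by
  have hπ := Real.pi_pos
  have hA0 : 0 ≤ A := le_trans (by positivity) hA
  set s := Real.sqrt (A/(4*Real.pi)) with hs
  have hs2 : s^2 = A/(4*Real.pi) := Real.sq_sqrt (by positivity)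
  have hs_ge : 2*m ≤ s := by
    have h1 : Real.sqrt ((2*m)^2) ≤ s := by
      apply Real.sqrt_le_sqrt
      rw [le_div_iff₀ (by positivity)]
      nlinarith
    rwa [Real.sqrt_sq (by positivity)] at h1
  have hD : 0 ≤ s^2 - 2*m*s := by nlinarith
  have hsq : Real.sqrt (s^2-2*m*s)^2 = s^2 - 2*m*s := Real.sq_sqrt hD
  have hsqnn : 0 ≤ Real.sqrt (s^2-2*m*s) := Real.sqrt_nonneg _
  have hrr : rr m A = (s - m + Real.sqrt (s^2 - 2*m*s))/2 := rfl
  have hge : m/2 ≤ rr m A := by rw [hrr]; linarith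
  refine ⟨hge, ?_⟩
  have hr0 : 0 < rr m A := lt_of_lt_of_le (by linarith) hge
  have hrw : (rr m A + m/2)^2 = s*(rr m A) := by
    have h2r : 2*(rr m A) + m - s = Real.sqrt (s^2 - 2*m*s) := by rw [hrr]; ring
    have h4 : (2*(rr m A) + m - s)^2 = s^2 - 2*m*s := by rw [h2r]; exact hsq
    nlinarith [h4]
  rw [schwA_eq m _ hr0.ne']
  have h5 : (rr m A + m/2)^4 = s^2*(rr m A)^2 := by
    rw [show (rr m A + m/2)^4 = ((rr m A + m/2)^2)^2 by ring, hrw]; ring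
  rw [h5, hs2]
  field_simp

lemma key_ineq (w r : ℝ) (hw : 0 < w) (h1 : 2*w ≤ r) (h2 : 4*r*w ≤ r^2 + w^2) :
    (r+w)^7/r^3 < 3*(r-w)*(FF w r - FF w w) := by
  have hr0 : 0 < r := by linarith
  have hrw : 0 < r + w := by linarith
  have hlog : 2*(r-w)/(r+w) ≤ Real.log r - Real.log w := by
    rw [← Real.log_div hr0.ne' hw.ne']
    have hx : 1 ≤ r/w := (le_div_iff₀ hw).2 (by linarith)
    calc 2*(r-w)/(r+w) = 2*(r/w-1)/(r/w+1) := by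
          rw [div_eq_div_iff (by positivity) (by positivity)]
          field_simp
      _ ≤ Real.log (r/w) := log_pade _ hx
  have hFw : FF w w = 20*w^3*Real.log w := by
    unfold FF
    field_simp
    ring
  have hexp : FF w r - FF w w = (r^3/3 + 3*w*r^2 + 15*w^2*r - 15*w^4/r - 3*w^5/r^2
      - w^6/(3*r^3)) + 20*w^3*(Real.log r - Real.log w) := by
    rw [hFw]; unfold FF; ring
  rw [hexp]
  have hM : 0 < 3*r^7*w + 48*r^6*w^2 + 165*r^5*w^3 - 1200*r^4*w^4 + 165*r^3*w^5
      + 48*r^2*w^6 + 3*r*w^7 := by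
    nlinarith [mul_nonneg (mul_nonneg (show (0:ℝ) ≤ 3*r*w by positivity)
        (show (0:ℝ) ≤ r^2 + w^2 - 4*r*w by linarith))
        (show (0:ℝ) ≤ r^4+20*r^3*w+134*r^2*w^2+116*r*w^3+385*w^4 by positivity),
      mul_nonneg (mul_nonneg (sub_nonneg.2 h1) hr0.le) (pow_nonneg hw.le 6),
      mul_pos hr0 (pow_pos hw 7)]
  have hstep : (r+w)^7/r^3 < 3*(r-w)*((r^3/3 + 3*w*r^2 + 15*w^2*r - 15*w^4/r - 3*w^5/r^2
      - w^6/(3*r^3)) + 20*w^3*(2*(r-w)/(r+w))) := by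
    rw [← sub_pos]
    have heq : 3*(r-w)*((r^3/3 + 3*w*r^2 + 15*w^2*r - 15*w^4/r - 3*w^5/r^2
        - w^6/(3*r^3)) + 20*w^3*(2*(r-w)/(r+w))) - (r+w)^7/r^3
        = (3*r^7*w + 48*r^6*w^2 + 165*r^5*w^3 - 1200*r^4*w^4 + 165*r^3*w^5
          + 48*r^2*w^6 + 3*r*w^7)/(3*r^3*(r+w)) := by
      field_simp
      ring
    rw [heq]
    exact div_pos hM (by positivity)
  refine lt_of_lt_of_le hstep ?_
  gcongr
  · linarith

lemma phi_schwA (m ρ : ℝ) (hm : 0 < m) (hρ : m/2 ≤ ρ) :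
    schwPhi m (schwA m ρ) = schwV m ρ := by
  unfold schwPhi
  have hex : ∃ x ∈ Set.Ici (m/2), schwA m x = schwA m ρ := ⟨ρ, hρ, rfl⟩
  have h1 := Function.invFunOn_eq hex
  have h2 := Function.invFunOn_mem hex
  rw [(schwA_strictMonoOn m hm).injOn h2 hρ h1]

lemma schwPhi_eq (m A : ℝ) (hm : 0 < m) (hA : 16*Real.pi*m^2 ≤ A) :
    schwPhi m A = 4*Real.pi*(FF (m/2) (rr m A) - FF (m/2) (m/2)) := by
  obtain ⟨h1, h2⟩ := rr_spec m A hm hA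
  conv_lhs => rw [← h2]
  rw [phi_schwA m _ hm h1, schwV_eq m _ hm h1]

lemma rr_facts (m A : ℝ) (hm : 0 < m) (hA : 36*Real.pi*m^2 ≤ A) :
    m/2 ≤ rr m A ∧ 2*(m/2) ≤ rr m A ∧
      4*(rr m A)*(m/2) ≤ (rr m A)^2 + (m/2)^2 ∧ schwA m (rr m A) = A := by
  have hπ := Real.pi_pos
  have hA16 : 16*Real.pi*m^2 ≤ A := le_trans (by nlinarith) hA
  obtain ⟨h1, h2⟩ := rr_spec m A hm hA16
  set r := rr m A
  have hr0 : 0 < r := lt_of_lt_of_le (by linarith) h1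
  have h36 : 36*Real.pi*m^2 ≤ 4*Real.pi*(r+m/2)^4/r^2 := by
    rw [← schwA_eq m r hr0.ne', h2]; exact hA
  have h4 : 36*Real.pi*m^2*r^2 ≤ 4*Real.pi*(r+m/2)^4 := by
    rw [← le_div_iff₀ (by positivity)]; exact h36
  have h5 : 9*m^2*r^2 ≤ (r+m/2)^4 := by nlinarith
  have h6 : 3*m*r ≤ (r+m/2)^2 := by
    nlinarith [sq_nonneg ((r+m/2)^2 - 3*m*r), sq_nonneg ((r+m/2)^2 + 3*m*r),
      mul_pos hm hr0, sq_nonneg (r+m/2)]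
  have hq : 4*r*(m/2) ≤ r^2 + (m/2)^2 := by nlinarith
  have hge : 2*(m/2) ≤ r := by nlinarith [mul_pos hm hr0]
  exact ⟨h1, hge, hq, h2⟩

lemma main_lemma (m a A : ℝ) (hm : 0 < m) (ha : 0 ≤ a) (hA : 36*Real.pi*m^2 ≤ A) :
    DifferentiableAt ℝ (fun A : ℝ => A ^ ((3 : ℝ) / 2) / (a + schwPhi m A)) A ∧
      0 < deriv (fun A : ℝ => A ^ ((3 : ℝ) / 2) / (a + schwPhi m A)) A := by
  have hπ := Real.pi_pos
  have hw : 0 < m/2 := by linarith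
  obtain ⟨hr1, hr2, hrq, hrA⟩ := rr_facts m A hm hA
  set w := m/2 with hwdef
  set r := rr m A with hrdef
  have hr0 : 0 < r := lt_of_lt_of_le hw hr1
  have hrw : w < r := by linarith
  have hA0 : 0 < A := lt_of_lt_of_le (by positivity) hA
  have hA16 : 16*Real.pi*m^2 < A := lt_of_lt_of_le (by nlinarith [mul_pos hπ (pow_pos hm 2)]) hA
  have hkey := key_ineq w r hw hr2 hrq
  have hFD : 0 < FF w r - FF w w := by
    have h7 : 0 < (r+w)^7/r^3 := by positivity
    have h8 : 0 < 3*(r-w)*(FF w r - FF w w) := lt_trans h7 hkey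
    rcases mul_pos_iff.1 h8 with ⟨_, h⟩ | ⟨h, _⟩
    · exact h
    · nlinarith
  set f : ℝ → ℝ := fun A : ℝ => A ^ ((3 : ℝ) / 2) / (a + schwPhi m A) with hf
  set expl : ℝ → ℝ := fun B : ℝ => B ^ ((3 : ℝ) / 2) / (a + 4*Real.pi*(FF w (rr m B) - FF w w))
    with hexpl
  -- f eventually equals expl
  have hev : f =ᶠ[nhds A] expl := by
    filter_upwards [Ioi_mem_nhds hA16] with B hB
    simp only [hf, hexpl, hwdef]
    rw [schwPhi_eq m B hm (le_of_lt hB)]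
  -- differentiability of rr at A
  have hAπ : 0 < A/(4*Real.pi) := by positivity
  set s := Real.sqrt (A/(4*Real.pi)) with hs
  have hs0 : 0 < s := Real.sqrt_pos.2 hAπ
  have hs_ge : 3*m ≤ s := by
    have h1 : Real.sqrt ((3*m)^2) ≤ s := by
      apply Real.sqrt_le_sqrt
      rw [le_div_iff₀ (by positivity)]
      nlinarith
    rwa [Real.sqrt_sq (by positivity)] at h1
  have hD : 0 < s^2 - 2*m*s := by nlinarith
  have hsA : HasDerivAt (fun B : ℝ => B/(4*Real.pi)) (1/(4*Real.pi)) A := by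
    simpa using (hasDerivAt_id A).div_const (4*Real.pi)
  have hsqrt1 : HasDerivAt (fun B : ℝ => Real.sqrt (B/(4*Real.pi)))
      (1/(2*s) * (1/(4*Real.pi))) A :=
    (Real.hasDerivAt_sqrt hAπ.ne').comp A hsA
  have hinner : HasDerivAt (fun B : ℝ => Real.sqrt (B/(4*Real.pi))^2
      - 2*m*Real.sqrt (B/(4*Real.pi)))
      (2*s^(2-1)*(1/(2*s) * (1/(4*Real.pi))) - 2*m*(1/(2*s) * (1/(4*Real.pi)))) A := by
    have hp := hsqrt1.pow 2
    have hc := hsqrt1.const_mul (2*m)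
    exact (hp.sub hc).congr_deriv (by simp [hs])
  have hsqrt2 : HasDerivAt (fun B : ℝ => Real.sqrt (Real.sqrt (B/(4*Real.pi))^2
      - 2*m*Real.sqrt (B/(4*Real.pi))))
      (1/(2*Real.sqrt (s^2 - 2*m*s)) * (2*s^(2-1)*(1/(2*s) * (1/(4*Real.pi)))
        - 2*m*(1/(2*s) * (1/(4*Real.pi))))) A :=
    (Real.hasDerivAt_sqrt hD.ne').comp A hinner
  have hrr_diff : DifferentiableAt ℝ (rr m) A := by
    have : HasDerivAt (rr m) ((1/(2*s) * (1/(4*Real.pi))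
        + 1/(2*Real.sqrt (s^2 - 2*m*s)) * (2*s^(2-1)*(1/(2*s) * (1/(4*Real.pi)))
        - 2*m*(1/(2*s) * (1/(4*Real.pi)))))/2) A := by
      exact (((hsqrt1.sub_const m).add hsqrt2).div_const 2)
    exact this.differentiableAt
  -- denominator positivity
  have hden : 0 < a + 4*Real.pi*(FF w r - FF w w) := by positivity
  -- differentiability of expl
  have hFFr := hasDerivAt_FF w r hr0.ne'
  have hexpl_diff : DifferentiableAt ℝ expl A := by
    apply DifferentiableAt.div
    · exact (Real.hasDerivAt_rpow_const (p := (3:ℝ)/2) (Or.inl hA0.ne')).differentiableAt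
    · exact (((hFFr.differentiableAt.comp A hrr_diff).sub_const (FF w w)).const_mul
        (4*Real.pi)).const_add a
    · exact hden.ne'
  have hf_diff : DifferentiableAt ℝ f A := by
    rw [Filter.EventuallyEq.differentiableAt_iff hev]
    exact hexpl_diff
  refine ⟨hf_diff, ?_⟩
  -- derivative of schwA at r
  set a' : ℝ := 8*Real.pi*(r+w)^3*(r-w)/r^3 with ha'
  have ha'pos : 0 < a' := by
    rw [ha']
    have : 0 < r - w := by linarith
    positivity
  have hXd : HasDerivAt (fun ρ : ℝ => 4*Real.pi*(ρ+w)^4/ρ^2) a' r := by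
    have h1 : HasDerivAt (fun ρ : ℝ => 4*Real.pi*(ρ+w)^4)
        (4*Real.pi*(((4:ℕ):ℝ)*(r+w)^(4-1)*1)) r := by
      exact (((hasDerivAt_id r).add_const w).pow 4).const_mul (4*Real.pi)
    have h2 : HasDerivAt (fun ρ : ℝ => ρ^2) (((2:ℕ):ℝ)*r^(2-1)) r := hasDerivAt_pow 2 r
    have h3 := h1.div h2 (pow_ne_zero 2 hr0.ne')
    refine h3.congr_deriv ?_
    rw [ha']
    field_simp
    ring
  have hAd : HasDerivAt (schwA m) a' r := by
    apply hXd.congr_of_eventuallyEq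
    filter_upwards [Ioi_mem_nhds hr0] with ρ hρ
    exact schwA_eq m ρ (ne_of_gt hρ)
  have hcomp : HasDerivAt (f ∘ schwA m) (deriv f A * a') r := by
    have hfA : HasDerivAt f (deriv f A) (schwA m r) := by
      rw [hrA]; exact hf_diff.hasDerivAt
    exact hfA.comp r hAd
  -- G explicit
  set G : ℝ → ℝ := fun ρ : ℝ => (4*Real.pi*(ρ+w)^4/ρ^2) ^ ((3:ℝ)/2)
    / (a + 4*Real.pi*(FF w ρ - FF w w)) with hG
  have hGev : G =ᶠ[nhds r] (f ∘ schwA m) := by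
    filter_upwards [Ioi_mem_nhds hrw] with ρ hρ
    have hρw : w ≤ ρ := le_of_lt hρ
    have hρ0 : 0 < ρ := lt_of_le_of_lt hw.le hρ
    simp only [hG, hf, Function.comp_apply]
    rw [phi_schwA m ρ hm hρw, schwV_eq m ρ hm hρw, schwA_eq m ρ hρ0.ne']
  have hG1 : HasDerivAt G (deriv f A * a') r := hcomp.congr_of_eventuallyEq hGev
  -- direct derivative of G
  set X : ℝ := 4*Real.pi*(r+w)^4/r^2 with hX
  have hXpos : 0 < X := by rw [hX]; positivity
  have hnum : HasDerivAt (fun ρ : ℝ => (4*Real.pi*(ρ+w)^4/ρ^2) ^ ((3:ℝ)/2))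
      ((3:ℝ)/2 * X ^ ((1:ℝ)/2) * a') r := by
    have hp : HasDerivAt (fun y : ℝ => y ^ ((3:ℝ)/2)) ((3:ℝ)/2 * X ^ ((3:ℝ)/2 - 1)) X :=
      Real.hasDerivAt_rpow_const (Or.inl hXpos.ne')
    have := hp.comp r hXd
    refine this.congr_deriv ?_
    norm_num
  have hdend : HasDerivAt (fun ρ : ℝ => a + 4*Real.pi*(FF w ρ - FF w w))
      (4*Real.pi*((r+w)^6/r^4)) r := by
    simpa using (((hasDerivAt_FF w r hr0.ne').sub_const (FF w w)).const_mul
      (4*Real.pi)).const_add a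
  have hG2 : HasDerivAt G
      (((3:ℝ)/2 * X ^ ((1:ℝ)/2) * a' * (a + 4*Real.pi*(FF w r - FF w w))
        - (4*Real.pi*(r+w)^4/r^2) ^ ((3:ℝ)/2) * (4*Real.pi*((r+w)^6/r^4)))
        / (a + 4*Real.pi*(FF w r - FF w w))^2) r :=
    hnum.div hdend hden.ne'
  have huniq := hG1.unique hG2
  -- positivity of the explicit derivative
  have hX32 : X ^ ((3:ℝ)/2) = X ^ ((1:ℝ)/2) * X := by
    rw [show (3:ℝ)/2 = 1/2 + 1 by norm_num, Real.rpow_add hXpos, Real.rpow_one]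
  have hE : 0 < (3:ℝ)/2 * a' * (a + 4*Real.pi*(FF w r - FF w w))
      - X * (4*Real.pi*((r+w)^6/r^4)) := by
    have hC : (3:ℝ)/2 * a' * (a + 4*Real.pi*(FF w r - FF w w))
        - X * (4*Real.pi*((r+w)^6/r^4))
        = (4*Real.pi*(r+w)^3/r^3) * (3*(r-w)*a
          + 4*Real.pi*(3*(r-w)*(FF w r - FF w w) - (r+w)^7/r^3)) := by
      rw [ha', hX]
      field_simp
      ring
    rw [hC]
    apply mul_pos (by positivity)
    have h1 : 0 ≤ 3*(r-w)*a := by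
      apply mul_nonneg _ ha
      linarith
    have h2 : 0 < 4*Real.pi*(3*(r-w)*(FF w r - FF w w) - (r+w)^7/r^3) := by
      apply mul_pos (by positivity)
      linarith
    linarith
  have hgval : 0 < ((3:ℝ)/2 * X ^ ((1:ℝ)/2) * a' * (a + 4*Real.pi*(FF w r - FF w w))
      - (4*Real.pi*(r+w)^4/r^2) ^ ((3:ℝ)/2) * (4*Real.pi*((r+w)^6/r^4)))
      / (a + 4*Real.pi*(FF w r - FF w w))^2 := by
    apply div_pos _ (by positivity)
    have hXhalf : 0 < X ^ ((1:ℝ)/2) := Real.rpow_pos_of_pos hXpos _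
    have : (3:ℝ)/2 * X ^ ((1:ℝ)/2) * a' * (a + 4*Real.pi*(FF w r - FF w w))
        - (4*Real.pi*(r+w)^4/r^2) ^ ((3:ℝ)/2) * (4*Real.pi*((r+w)^6/r^4))
        = X ^ ((1:ℝ)/2) * ((3:ℝ)/2 * a' * (a + 4*Real.pi*(FF w r - FF w w))
          - X * (4*Real.pi*((r+w)^6/r^4))) := by
      rw [← hX, hX32]
      ring
    rw [this]
    exact mul_pos hXhalf hE
  rw [← huniq] at hgval
  have : deriv f A = (deriv f A * a') / a' := by
    field_simp
  rw [this]
  exact div_pos hgval ha'pos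

/-- For `m > 0` and `a ≥ 0`, the function `A ↦ A^{3/2}/(a + φ_m(A))` is
strictly increasing on `[36πm², ∞)`; equivalently its derivative is strictly positive
there. -/
theorem schwPhi_isoperimetric_ratio_mono (m a : ℝ) (hm : 0 < m) (ha : 0 ≤ a) :
    StrictMonoOn (fun A : ℝ => A ^ ((3 : ℝ) / 2) / (a + schwPhi m A))
      (Set.Ici (36 * Real.pi * m ^ 2)) ∧
    ∀ A : ℝ, 36 * Real.pi * m ^ 2 ≤ A →
      0 < deriv (fun A : ℝ => A ^ ((3 : ℝ) / 2) / (a + schwPhi m A)) A := by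
  have hmain := fun (A : ℝ) (hA : 36*Real.pi*m^2 ≤ A) => main_lemma m a A hm ha hA
  constructor
  · apply strictMonoOn_of_deriv_pos (convex_Ici _)
    · intro x hx
      exact ((hmain x hx).1).continuousAt.continuousWithinAt
    · intro x hx
      rw [interior_Ici] at hx
      exact (hmain x (le_of_lt hx)).2
  · intro A hA
    exact (hmain A hA).2
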